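/- For every real number p with 0 < p < 1 and p ≠ 1/2, and every real number t, one has p · exp(t(1 − p)) + (1 − p) · exp(−t p) ≤ exp(t² (1 − 2p) / (4 (ln(1 − p) − ln p))). Equivalently, a Bernoulli random variable with success probability p, after centering by its mean p, is σ-sub-Gaussian with variance proxy σ = (1 − 2p)/(2(ln(1 − p) − ln p)): its moment generating function E[exp(t(X − p))] is bounded by exp(σ t²/2). -/

import Mathlib

open Real Set

private lemma ks_two_mul_lt {s : ℝ} (hs : 0 < s) :
    2 * s * Real.exp s < Real.exp s ^ 2 - 1 := by
  have h : s < Real.sinh s := Real.self_lt_sinh_iff.2 hs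
  rw [Real.sinh_eq] at h
  have he : 0 < Real.exp s := Real.exp_pos s
  have hneg : Real.exp (-s) * Real.exp s = 1 := by
    rw [← Real.exp_add]; simp
  nlinarith [Real.exp_pos (-s)]

private lemma ks_ratio_strictAnti :
    StrictAntiOn (fun s : ℝ => (Real.exp s - 1) / ((Real.exp s + 1) * s)) (Set.Ioi 0) := by
  apply strictAntiOn_of_deriv_neg (convex_Ioi 0)
  · apply ContinuousOn.div
    · fun_prop
    · fun_prop
    · intro x hx
      have hx0 : (0:ℝ) < x := hx
      positivity
  · intro x hx
    rw [interior_Ioi] at hx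
    have hx0 : (0:ℝ) < x := hx
    have hD : (Real.exp x + 1) * x ≠ 0 := by positivity
    have h1 : HasDerivAt (fun s : ℝ => Real.exp s - 1) (Real.exp x) x :=
      (Real.hasDerivAt_exp x).sub_const 1
    have h2 : HasDerivAt (fun s : ℝ => (Real.exp s + 1) * s)
        (Real.exp x * x + (Real.exp x + 1) * 1) x :=
      ((Real.hasDerivAt_exp x).add_const 1).mul (hasDerivAt_id x)
    have h := h1.div h2 hD
    rw [show (fun s : ℝ => (Real.exp s - 1) / ((Real.exp s + 1) * s)) = ((fun s : ℝ => Real.exp s - 1) / fun s : ℝ => (Real.exp s + 1) * s) from rfl, h.deriv]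
    apply div_neg_of_neg_of_pos
    · nlinarith [ks_two_mul_lt hx0, Real.exp_pos x]
    · positivity

private lemma ks_ratio_lt {a b : ℝ} (ha : 0 < a) (hab : a < b) :
    (Real.exp b - 1) / (Real.exp b + 1) * a < (Real.exp a - 1) / (Real.exp a + 1) * b := by
  have hb : 0 < b := ha.trans hab
  have h := ks_ratio_strictAnti (mem_Ioi.2 ha) (mem_Ioi.2 hb) hab
  have hea : (0:ℝ) < Real.exp a + 1 := by positivity
  have heb : (0:ℝ) < Real.exp b + 1 := by positivity
  beta_reduce at h
  rw [div_lt_div_iff₀ (by positivity) (by positivity)] at h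
  rw [div_mul_eq_mul_div, div_mul_eq_mul_div, div_lt_div_iff₀ heb hea]
  nlinarith [h]

private lemma ks_key (p t : ℝ) (hp0 : 0 < p) (hp2 : p < 1/2) :
    p * Real.exp (t * (1 - p)) + (1 - p) * Real.exp (-(t * p)) ≤
      Real.exp (t ^ 2 * (1 - 2 * p) / (4 * (Real.log (1 - p) - Real.log p))) := by
  have h1p : (0:ℝ) < 1 - p := by linarith
  set L : ℝ := Real.log (1 - p) - Real.log p with hLdef
  have hL0 : 0 < L := by
    have := Real.log_lt_log hp0 (by linarith : p < 1 - p)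
    simp only [hLdef]; linarith
  set c : ℝ := (1 - 2*p)/(4*L) with hcdef
  have hc0 : 0 < c := div_pos (by linarith) (by linarith)
  have heL : Real.exp L = (1-p)/p := by
    rw [hLdef, Real.exp_sub, Real.exp_log h1p, Real.exp_log hp0]
  have h4cL : 4*c*L = 1 - 2*p := by
    rw [hcdef]; field_simp
  have htanh : (Real.exp L - 1)/(Real.exp L + 1) = 1 - 2*p := by
    rw [heL]; rw [div_eq_iff (by positivity : (1-p)/p + 1 ≠ 0)]
    field_simp
    ring
  set F : ℝ → ℝ := fun s => Real.log ((1-p)*(1+Real.exp s)) - p*(L+s) - c*(L+s)^2 with hFdef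
  have hFL : F L = 0 := by
    have harg : (1-p)*(1+Real.exp L) = Real.exp L := by
      rw [heL]; field_simp; ring
    have h2 : c*(L+L)^2 = (4*c*L)*L := by ring
    simp only [hFdef, harg, Real.log_exp]
    rw [h4cL] at h2; linarith [h2]
  -- derivative of F
  have hFderiv : ∀ s : ℝ, HasDerivAt F
      (Real.exp s/(1+Real.exp s) - p - c*(2*(L+s))) s := by
    intro s
    have hpos : (0:ℝ) < (1-p)*(1+Real.exp s) := by positivity
    have h1 : HasDerivAt (fun u : ℝ => (1-p)*(1+Real.exp u)) ((1-p)*Real.exp s) s := by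
      exact (((Real.hasDerivAt_exp s).const_add 1).const_mul (1-p))
    have h2 : HasDerivAt (fun u : ℝ => Real.log ((1-p)*(1+Real.exp u)))
        ((1-p)*Real.exp s / ((1-p)*(1+Real.exp s))) s := h1.log hpos.ne'
    have h3 : HasDerivAt (fun u : ℝ => p*(L+u)) p s := by
      simpa using ((hasDerivAt_id s).const_add L).const_mul p
    have h4 : HasDerivAt (fun u : ℝ => c*(L+u)^2) (c*(2*(L+s))) s := by
      have := (((hasDerivAt_id s).const_add L).pow 2).const_mul c
      simpa [mul_comm, mul_assoc, mul_left_comm] using this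
    have := (h2.sub h3).sub h4
    have harg : (1-p)*Real.exp s / ((1-p)*(1+Real.exp s)) = Real.exp s/(1+Real.exp s) := by
      rw [mul_div_mul_left _ _ (by linarith : (1:ℝ)-p ≠ 0)]
    rw [harg] at this
    exact this
  -- derivative sign on (0, L)
  have hderiv_pos : ∀ s : ℝ, 0 < s → s < L →
      0 < Real.exp s/(1+Real.exp s) - p - c*(2*(L+s)) := by
    intro s hs hsL
    have hkey := ks_ratio_lt hs hsL
    rw [htanh] at hkey
    have hE : (0:ℝ) < Real.exp s := Real.exp_pos s
    have hrw : Real.exp s/(1+Real.exp s) - p - c*(2*(L+s))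
        = ((Real.exp s - 1)/(Real.exp s + 1)*L - (1-2*p)*s)/(2*L) := by
      rw [hcdef]
      field_simp
      ring
    rw [hrw]
    apply div_pos (by linarith) (by linarith)
  have hderiv_neg : ∀ s : ℝ, L < s →
      Real.exp s/(1+Real.exp s) - p - c*(2*(L+s)) < 0 := by
    intro s hLs
    have hkey := ks_ratio_lt hL0 hLs
    rw [htanh] at hkey
    have hE : (0:ℝ) < Real.exp s := Real.exp_pos s
    have hrw : Real.exp s/(1+Real.exp s) - p - c*(2*(L+s))
        = ((Real.exp s - 1)/(Real.exp s + 1)*L - (1-2*p)*s)/(2*L) := by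
      rw [hcdef]
      field_simp
      ring
    rw [hrw]
    apply div_neg_of_neg_of_pos (by linarith) (by linarith)
  have hFcont : Continuous F := by
    have : Differentiable ℝ F := fun x => (hFderiv x).differentiableAt
    exact this.continuous
  -- F monotone on [0, L]
  have hmono : MonotoneOn F (Icc 0 L) := by
    apply monotoneOn_of_deriv_nonneg (convex_Icc 0 L) hFcont.continuousOn
      (fun x _ => (hFderiv x).differentiableAt.differentiableWithinAt)
    intro x hx
    rw [interior_Icc, mem_Ioo] at hx
    rw [(hFderiv x).deriv]
    exact le_of_lt (hderiv_pos x hx.1 hx.2)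
  have hanti : AntitoneOn F (Ici L) := by
    apply antitoneOn_of_deriv_nonpos (convex_Ici L) hFcont.continuousOn
      (fun x _ => (hFderiv x).differentiableAt.differentiableWithinAt)
    intro x hx
    rw [interior_Ici, mem_Ioi] at hx
    rw [(hFderiv x).deriv]
    exact le_of_lt (hderiv_neg x hx)
  -- evenness
  have heven : ∀ s : ℝ, F (-s) = F s := by
    intro s
    have hE : (0:ℝ) < Real.exp (-s) := Real.exp_pos _
    have hprod : (1-p)*(1+Real.exp s) = Real.exp s * ((1-p)*(1+Real.exp (-s))) := by
      rw [Real.exp_neg]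
      field_simp
      ring
    have hlog : Real.log ((1-p)*(1+Real.exp s))
        = s + Real.log ((1-p)*(1+Real.exp (-s))) := by
      rw [hprod, Real.log_mul (Real.exp_ne_zero s) (by positivity), Real.log_exp]
    have hsq : c*(L+s)^2 - c*(L + -s)^2 = (4*c*L)*s := by ring
    rw [h4cL] at hsq
    simp only [hFdef, hlog]
    linarith [hsq]
  -- F nonpositive
  have hFnonpos : ∀ s : ℝ, F s ≤ 0 := by
    have h0 : ∀ s : ℝ, 0 ≤ s → F s ≤ 0 := by
      intro s hs
      rcases le_total s L with h | h
      · rw [← hFL]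
        exact hmono (mem_Icc.2 ⟨hs, h⟩) (mem_Icc.2 ⟨le_of_lt hL0, le_refl L⟩) h
      · rw [← hFL]
        exact hanti (mem_Ici.2 (le_refl L)) (mem_Ici.2 h) h
    intro s
    rcases le_total 0 s with h | h
    · exact h0 s h
    · rw [← heven s] at *
      exact h0 (-s) (by linarith)
  -- ψ(t) ≤ 0
  have hpsi : Real.log (1 - p + p * Real.exp t) ≤ p*t + c*t^2 := by
    have := hFnonpos (t - L)
    have harg : (1-p)*(1+Real.exp (t-L)) = 1 - p + p * Real.exp t := by
      rw [Real.exp_sub, heL]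
      field_simp
    simp only [hFdef, harg] at this
    have h1 : L + (t - L) = t := by ring
    rw [h1] at this
    linarith
  -- exponentiate
  have hpos : (0:ℝ) < 1 - p + p * Real.exp t := by positivity
  have h2 : 1 - p + p * Real.exp t ≤ Real.exp (p*t + c*t^2) := by
    calc 1 - p + p * Real.exp t = Real.exp (Real.log (1 - p + p * Real.exp t)) :=
          (Real.exp_log hpos).symm
      _ ≤ Real.exp (p*t + c*t^2) := Real.exp_le_exp.2 hpsi
  have h3 := mul_le_mul_of_nonneg_left h2 (le_of_lt (Real.exp_pos (-(t*p))))
  calc p * Real.exp (t * (1 - p)) + (1 - p) * Real.exp (-(t * p))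
      = Real.exp (-(t*p)) * (1 - p + p * Real.exp t) := by
        rw [show t * (1-p) = -(t*p) + t by ring, Real.exp_add]; ring
    _ ≤ Real.exp (-(t*p)) * Real.exp (p*t + c*t^2) := h3
    _ = Real.exp (c*t^2) := by rw [← Real.exp_add]; ring_nf
    _ = Real.exp (t ^ 2 * (1 - 2 * p) / (4 * L)) := by rw [hcdef]; ring_nf


theorem bernoulli_kearns_saul (p t : ℝ) (hp0 : 0 < p) (hp1 : p < 1) (hp : p ≠ 1 / 2) :
    p * Real.exp (t * (1 - p)) + (1 - p) * Real.exp (-(t * p)) ≤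
      Real.exp (t ^ 2 * (1 - 2 * p) / (4 * (Real.log (1 - p) - Real.log p))) := by
  rcases lt_or_gt_of_ne hp with h | h
  · exact ks_key p t hp0 h
  · have h' : 1 - p < 1/2 := by linarith
    have key := ks_key (1-p) (-t) (by linarith) h'
    have e1 : (1:ℝ) - (1-p) = p := by ring
    rw [e1] at key
    have e2 : -t * p = -(t*p) := by ring
    have e3 : -(-t * (1-p)) = t * (1-p) := by ring
    rw [e2, e3] at key
    have e4 : (-t)^2 * (1 - 2*(1-p)) / (4 * (Real.log p - Real.log (1-p)))
        = t^2 * (1 - 2*p) / (4 * (Real.log (1-p) - Real.log p)) := by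
      rw [show (-t)^2 * (1 - 2*(1-p)) = -(t^2 * (1 - 2*p)) by ring,
        show 4 * (Real.log p - Real.log (1-p)) = -(4 * (Real.log (1-p) - Real.log p)) by ring,
        neg_div_neg_eq]
    rw [e4] at key
    linarith
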